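/- For all distinct x, y in the open interval (-1,1), one has log|x - y| = -log 2 - Σ_{n=1}^∞ (2/n) T_n(x) T_n(y), where T_n is the n-th Chebyshev polynomial of the first kind (the unique polynomial with T_n(cos θ) = cos(nθ)). -/

import Mathlib

open Polynomial Filter

open Finset Complex Topology


lemma norm_one_sub_exp (θ : ℝ) :
    ‖(1 : ℂ) - Complex.exp (θ * Complex.I)‖ = 2 * |Real.sin (θ / 2)| := by
  have h : Complex.exp ((θ : ℂ) * Complex.I) = (Real.cos θ : ℂ) + (Real.sin θ : ℂ) * Complex.I := by
    rw [Complex.exp_mul_I, Complex.ofReal_cos, Complex.ofReal_sin]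
  have hs : |Real.sin (θ / 2)| ^ 2 = (1 - Real.cos θ) / 2 := by
    rw [Real.abs_sin_half]
    exact Real.sq_sqrt (by nlinarith [Real.cos_le_one θ])
  have h2 : ‖(1 : ℂ) - Complex.exp (θ * Complex.I)‖ ^ 2 = (2 * |Real.sin (θ / 2)|) ^ 2 := by
    rw [h, Complex.sq_norm, Complex.normSq_apply]
    simp only [Complex.sub_re, Complex.sub_im, Complex.one_re, Complex.one_im,
      Complex.add_re, Complex.add_im, Complex.ofReal_re, Complex.ofReal_im,
      Complex.mul_re, Complex.mul_im, Complex.I_re, Complex.I_im]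
    have := Real.sin_sq_add_cos_sq θ
    rw [mul_pow]
    nlinarith
  have h3 : (0:ℝ) ≤ ‖(1 : ℂ) - Complex.exp (θ * Complex.I)‖ := norm_nonneg _
  have h4 : (0:ℝ) ≤ 2 * |Real.sin (θ / 2)| := by positivity
  nlinarith

lemma cos_series_tendsto (θ : ℝ) (hθ : Real.sin (θ / 2) ≠ 0) :
    Tendsto (fun N : ℕ => ∑ n ∈ Finset.range N, Real.cos (n * θ) / n) atTop
      (𝓝 (-Real.log (2 * |Real.sin (θ / 2)|))) := by
  set z : ℂ := Complex.exp (θ * Complex.I) with hzdef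
  have hz1 : ‖z‖ = 1 := Complex.norm_exp_ofReal_mul_I θ
  have hnorm : ‖(1 : ℂ) - z‖ = 2 * |Real.sin (θ / 2)| := norm_one_sub_exp θ
  have hzne : z ≠ 1 := by
    intro h
    rw [h] at hnorm
    simp at hnorm
    exact hθ hnorm
  -- partial geometric sums are bounded
  have hb : ∀ n : ℕ, ‖∑ i ∈ range n, z ^ (i + 1)‖ ≤ 2 / ‖(1:ℂ) - z‖ := by
    intro n
    have : ∑ i ∈ range n, z ^ (i + 1) = z * ((z ^ n - 1) / (z - 1)) := by
      rw [← geom_sum_eq hzne, mul_sum]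
      exact Finset.sum_congr rfl fun i _ => by ring
    rw [this, norm_mul, norm_div]
    have hzn : ‖z‖ = 1 := hz1
    have h1 : ‖z ^ n - 1‖ ≤ 2 := by
      calc ‖z ^ n - 1‖ ≤ ‖z ^ n‖ + ‖(1:ℂ)‖ := norm_sub_le _ _
        _ = 2 := by rw [norm_pow, hzn]; norm_num
    have h2 : ‖z - 1‖ = ‖(1:ℂ) - z‖ := by rw [← norm_neg]; ring_nf
    rw [hzn, one_mul, h2]
    have hpos : (0:ℝ) < ‖(1:ℂ) - z‖ := by
      rw [hnorm]; positivity
    gcongr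
  -- Dirichlet test: the series ∑ z^n / n has convergent partial sums
  have hanti : Antitone (fun i : ℕ => (1 : ℝ) / (i + 1)) := by
    intro a b hab
    apply div_le_div_of_nonneg_left one_pos.le (by positivity)
    exact_mod_cast by omega
  have hcauchy : CauchySeq (fun N => ∑ i ∈ range N, ((1 : ℝ) / (i + 1)) • z ^ (i + 1)) :=
    hanti.cauchySeq_series_mul_of_tendsto_zero_of_bounded
      tendsto_one_div_add_atTop_nhds_zero_nat hb
  obtain ⟨l, hl⟩ := cauchySeq_tendsto_of_complete hcauchy
  have hterm : ∀ i : ℕ, ((1 : ℝ) / (i + 1)) • z ^ (i + 1) = z ^ (i + 1) / ((i : ℂ) + 1) := by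
    intro i
    rw [Complex.real_smul]
    push_cast
    ring
  have hl2 : Tendsto (fun N : ℕ => ∑ n ∈ range N, z ^ n / n) atTop (𝓝 l) := by
    rw [← tendsto_add_atTop_iff_nat 1]
    have : ∀ N : ℕ, ∑ n ∈ range (N + 1), z ^ n / n
        = ∑ i ∈ range N, ((1 : ℝ) / (i + 1)) • z ^ (i + 1) := by
      intro N
      rw [Finset.sum_range_succ']
      simp only [pow_zero, Nat.cast_zero, div_zero, add_zero]
      refine Finset.sum_congr rfl fun i _ => ?_
      rw [hterm i]
      push_cast
      ring
    exact hl.congr fun N => (this N).symm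
  -- Abel's limit theorem
  have habel := Complex.tendsto_tsum_powerSeries_nhdsWithin_lt hl2
  rw [tendsto_map'_iff] at habel
  -- identify the Abel limit as -log(1-z)
  have hre : z.re < 1 := by
    rcases lt_or_eq_of_le ((Complex.re_le_norm z).trans_eq hz1) with h | h
    · exact h
    · exfalso
      apply hzne
      have hsq : Complex.normSq z = 1 := by
        rw [← Complex.sq_norm, hz1]; norm_num
      rw [Complex.normSq_apply, h] at hsq
      have him : z.im = 0 := by nlinarith
      exact Complex.ext (by simp [h]) (by simp [him])
  have hslit : (1 : ℂ) - z ∈ Complex.slitPlane := by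
    left
    simp only [Complex.sub_re, Complex.one_re]
    linarith
  have hcont : Tendsto (fun r : ℝ => -Complex.log (1 - r * z)) (𝓝[<] (1:ℝ))
      (𝓝 (-Complex.log (1 - z))) := by
    have h1 : Tendsto (fun r : ℝ => (1 : ℂ) - r * z) (𝓝[<] (1:ℝ)) (𝓝 ((1:ℂ) - z)) := by
      have : Continuous fun r : ℝ => (1 : ℂ) - r * z := by continuity
      have := this.tendsto (1 : ℝ)
      simp only [Complex.ofReal_one, one_mul] at this
      exact this.mono_left nhdsWithin_le_nhds
    exact ((continuousAt_clog hslit).tendsto.comp h1).neg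
  have heq : (fun r : ℝ => ∑' n : ℕ, z ^ n / n * (r : ℂ) ^ n) =ᶠ[𝓝[<] (1:ℝ)]
      (fun r : ℝ => -Complex.log (1 - r * z)) := by
    filter_upwards [Ioo_mem_nhdsLT_of_mem (show (1:ℝ) ∈ Set.Ioc (-1:ℝ) 1 from ⟨by norm_num, le_refl _⟩)]
      with r hr
    have hrz : ‖(r : ℂ) * z‖ < 1 := by
      rw [norm_mul, Complex.norm_real, hz1, mul_one, Real.norm_eq_abs]
      rw [abs_lt]
      exact ⟨by linarith [hr.1], hr.2⟩
    have := (Complex.hasSum_taylorSeries_neg_log hrz).tsum_eq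
    rw [← this]
    congr 1
    funext n
    rw [mul_pow]
    ring
  have hlim2 : Tendsto (fun r : ℝ => ∑' n : ℕ, z ^ n / n * (r : ℂ) ^ n) (𝓝[<] (1:ℝ))
      (𝓝 (-Complex.log (1 - z))) := hcont.congr' heq.symm
  have hleq : l = -Complex.log (1 - z) := tendsto_nhds_unique habel hlim2
  -- take real parts
  have hrepart := (Complex.continuous_re.tendsto l).comp hl2
  rw [hleq] at hrepart
  have hval : (-Complex.log (1 - z)).re = -Real.log (2 * |Real.sin (θ / 2)|) := by
    rw [Complex.neg_re, Complex.log_re, hnorm]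
  rw [hval] at hrepart
  refine hrepart.congr fun N => ?_
  simp only [Function.comp_apply, Complex.re_sum]
  refine Finset.sum_congr rfl fun n _ => ?_
  have hz : z ^ n = Complex.exp ((n * θ : ℝ) * Complex.I) := by
    rw [hzdef, ← Complex.exp_nat_mul]
    push_cast
    ring_nf
  rw [hz]
  rw [show ((n : ℂ)) = ((n : ℝ) : ℂ) by push_cast; rfl, Complex.div_ofReal_re,
    Complex.exp_ofReal_mul_I_re]

/-- Chebyshev expansion of the logarithm: for distinct `x, y ∈ (-1,1)`,
`log |x - y| = -log 2 - ∑_{n=1}^∞ (2/n) T_n(x) T_n(y)`,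
formalized as convergence of the partial sums. -/
theorem chebyshev_log_expansion (x y : ℝ) (hx : x ∈ Set.Ioo (-1 : ℝ) 1)
    (hy : y ∈ Set.Ioo (-1 : ℝ) 1) (hxy : x ≠ y) :
    Tendsto (fun M : ℕ =>
        -Real.log 2 - ∑ n ∈ Finset.Icc 1 M,
          (2 / (n : ℝ)) * ((Chebyshev.T ℝ n).eval x) * ((Chebyshev.T ℝ n).eval y))
      atTop (nhds (Real.log |x - y|)) := by
  obtain ⟨hx1, hx2⟩ := hx
  obtain ⟨hy1, hy2⟩ := hy
  set a := Real.arccos x with ha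
  set b := Real.arccos y with hb
  have hxa : Real.cos a = x := Real.cos_arccos hx1.le hx2.le
  have hyb : Real.cos b = y := Real.cos_arccos hy1.le hy2.le
  have ha0 : 0 < a := Real.arccos_pos.mpr hx2
  have haπ : a < Real.pi := lt_of_le_of_ne (Real.arccos_le_pi x)
    (fun h => by rw [h, Real.cos_pi] at hxa; linarith)
  have hb0 : 0 < b := Real.arccos_pos.mpr hy2
  have hbπ : b < Real.pi := lt_of_le_of_ne (Real.arccos_le_pi y)
    (fun h => by rw [h, Real.cos_pi] at hyb; linarith)
  have hab : a ≠ b := fun h => hxy (by rw [← hxa, ← hyb, h])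
  have hπ : (0:ℝ) < Real.pi := Real.pi_pos
  -- the two angles
  have hs1 : Real.sin ((a - b) / 2) ≠ 0 := by
    intro h
    rw [Real.sin_eq_zero_iff_of_lt_of_lt (by linarith) (by linarith)] at h
    exact hab (by linarith)
  have hs2 : Real.sin ((a + b) / 2) ≠ 0 :=
    ne_of_gt (Real.sin_pos_of_pos_of_lt_pi (by linarith) (by linarith))
  have h1 := cos_series_tendsto (a - b) hs1
  have h2 := cos_series_tendsto (a + b) hs2
  have hcomb := ((h1.add h2).const_sub (-Real.log 2)).comp (tendsto_add_atTop_nat 1)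
  have hfun : (fun M : ℕ =>
        -Real.log 2 - ∑ n ∈ Finset.Icc 1 M,
          (2 / (n : ℝ)) * ((Chebyshev.T ℝ n).eval x) * ((Chebyshev.T ℝ n).eval y))
      = fun M : ℕ => -Real.log 2 -
        ((∑ n ∈ Finset.range (M + 1), Real.cos (n * (a - b)) / n)
          + ∑ n ∈ Finset.range (M + 1), Real.cos (n * (a + b)) / n) := by
    funext M
    rw [← Finset.sum_add_distrib]
    congr 1
    have hIcc : Finset.Icc 1 M = (Finset.range (M + 1)).erase 0 := by
      ext n; simp only [Finset.mem_Icc, Finset.mem_erase, Finset.mem_range, Nat.lt_succ_iff]; omega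
    rw [hIcc, Finset.sum_erase _ (by simp)]
    refine Finset.sum_congr rfl fun n _ => ?_
    have hT1 : (Chebyshev.T ℝ n).eval x = Real.cos (n * a) := by
      rw [← hxa, Chebyshev.T_real_cos]; push_cast; ring_nf
    have hT2 : (Chebyshev.T ℝ n).eval y = Real.cos (n * b) := by
      rw [← hyb, Chebyshev.T_real_cos]; push_cast; ring_nf
    rw [hT1, hT2]
    rcases Nat.eq_zero_or_pos n with rfl | hn
    · simp
    have hn' : (n : ℝ) ≠ 0 := Nat.cast_ne_zero.mpr hn.ne'
    have hcc : Real.cos (n * (a - b)) + Real.cos (n * (a + b))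
        = 2 * Real.cos (n * a) * Real.cos (n * b) := by
      rw [show (n:ℝ) * (a - b) = n * a - n * b by ring,
        show (n:ℝ) * (a + b) = n * a + n * b by ring,
        Real.cos_sub, Real.cos_add]
      ring
    field_simp
    linarith [hcc]
  rw [hfun]
  have hval : -Real.log 2 - (-Real.log (2 * |Real.sin ((a - b) / 2)|)
      + -Real.log (2 * |Real.sin ((a + b) / 2)|)) = Real.log |x - y| := by
    have hxy' : x - y = -2 * Real.sin ((a + b) / 2) * Real.sin ((a - b) / 2) := by
      rw [← hxa, ← hyb, Real.cos_sub_cos]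
    have h2s1 : (2 * |Real.sin ((a - b) / 2)|) ≠ 0 := by positivity
    have h2s2 : (2 * |Real.sin ((a + b) / 2)|) ≠ 0 := by positivity
    have habs : |x - y| = (2 * |Real.sin ((a - b) / 2)|) * (2 * |Real.sin ((a + b) / 2)|) / 2 := by
      rw [hxy', abs_mul, abs_mul]
      rw [abs_of_nonpos (by norm_num : (-2:ℝ) ≤ 0)]
      ring
    rw [habs, Real.log_div (by positivity) (by norm_num),
      Real.log_mul h2s1 h2s2]
    ring
  rw [← hval]
  exact hcomb.congr fun M => by simp [Function.comp]
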